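/- Let A, B, a, b be positive integers with a ≤ A, b ≤ B, let G = ℤ_A × ℤ_B and f = 𝟙_{[a]×[b]}. Then the zero set Z(f̂) of the Fourier transform of f does not intersect the difference set Q' − Q', where Q' = [A/gcd(A,a)] × [B/gcd(B,b)] ⊆ G; equivalently, Z(f̂) is disjoint from the set {−(A/gcd(A,a)−1),…,A/gcd(A,a)−1} × {−(B/gcd(B,b)−1),…,B/gcd(B,b)−1} taken mod (A,B). -/
import Mathlib


/-- Fourier transform on `ℤ_A × ℤ_B` of the indicator of the cube `[a] × [b]`. -/
noncomputable def cubeFT (A B a b : ℕ) [NeZero A] [NeZero B] (j : ZMod A) (k : ZMod B) : ℂ :=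
  ∑ x : ZMod A, ∑ y : ZMod B,
    (if x.val < a ∧ y.val < b then (1 : ℂ) else 0) *
      Complex.exp (-(2 * (Real.pi : ℂ) * Complex.I) *
        ((j.val : ℂ) * (x.val : ℂ) / (A : ℂ) + (k.val : ℂ) * (y.val : ℂ) / (B : ℂ)))

/-- The cube `Q' = [A/gcd(A,a)] × [B/gcd(B,b)]` in `ℤ_A × ℤ_B`. -/
def Q' (A B a b : ℕ) [NeZero A] [NeZero B] : Finset (ZMod A × ZMod B) :=
  Finset.univ.filter fun p => p.1.val < A / Nat.gcd A a ∧ p.2.val < B / Nat.gcd B b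

open Finset

/-- Sum over `ZMod N` equals sum over `range N` of values. -/
lemma zmod_sum_eq_range (N : ℕ) [NeZero N] (f : ℕ → ℂ) :
    ∑ x : ZMod N, f x.val = ∑ i ∈ range N, f i :=
  Finset.sum_nbij' (i := fun (x : ZMod N) => x.val) (j := fun i => (i : ZMod N))
    (fun x _ => by simp [ZMod.val_lt]) (fun i _ => by simp)
    (fun x _ => by simp [ZMod.natCast_val, ZMod.cast_id])
    (fun i hi => by simp [ZMod.val_cast_of_lt (mem_range.mp hi)])
    (fun x _ => rfl)

/-- One-dimensional Fourier sum. -/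
noncomputable def oneDimFT (N c : ℕ) [NeZero N] (j : ZMod N) : ℂ :=
  ∑ x : ZMod N, (if x.val < c then (1 : ℂ) else 0) *
    Complex.exp (-(2 * (Real.pi : ℂ) * Complex.I) * ((j.val : ℂ) * (x.val : ℂ) / (N : ℂ)))

lemma two_pi_I_ne : (2 * (Real.pi : ℂ) * Complex.I) ≠ 0 := by
  simp [Real.pi_ne_zero, Complex.I_ne_zero]

lemma aux_exp_dvd (N t : ℕ) (hN : N ≠ 0)
    (h : Complex.exp (-(2 * (Real.pi : ℂ) * Complex.I) * ((t : ℂ) / (N : ℂ))) = 1) :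
    N ∣ t := by
  rw [Complex.exp_eq_one_iff] at h
  obtain ⟨n, hn⟩ := h
  have hNc : (N : ℂ) ≠ 0 := Nat.cast_ne_zero.mpr hN
  have h1 : (t : ℂ) / (N : ℂ) = ((-n : ℤ) : ℂ) :=
    mul_left_cancel₀ two_pi_I_ne (by push_cast; linear_combination -hn)
  rw [div_eq_iff hNc] at h1
  have h2 : (t : ℤ) = (-n) * (N : ℤ) := by exact_mod_cast h1
  exact Int.ofNat_dvd.mp ⟨-n, by rw [h2]; ring⟩

lemma oneDimFT_eq_geom (N c : ℕ) [NeZero N] (hcN : c ≤ N) (j : ZMod N) :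
    oneDimFT N c j =
      ∑ i ∈ range c,
        (Complex.exp (-(2 * (Real.pi : ℂ) * Complex.I) * ((j.val : ℂ) / (N : ℂ)))) ^ i := by
  unfold oneDimFT
  rw [zmod_sum_eq_range N (fun i => (if i < c then (1 : ℂ) else 0) *
    Complex.exp (-(2 * (Real.pi : ℂ) * Complex.I) * ((j.val : ℂ) * (i : ℂ) / (N : ℂ))))]
  rw [← Finset.sum_subset (Finset.range_subset_range.mpr hcN)
    (fun i _ hi => by simp [Nat.not_lt.mpr (by simpa using hi)])]
  refine Finset.sum_congr rfl fun i hi => ?_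
  rw [if_pos (mem_range.mp hi), one_mul, ← Complex.exp_nat_mul]
  ring_nf

lemma oneDimFT_ne_zero (N c : ℕ) [NeZero N] (hc : 0 < c) (hcN : c ≤ N) (j : ZMod N)
    (h : N ∣ j.val * c → j = 0) : oneDimFT N c j ≠ 0 := by
  have hN : N ≠ 0 := NeZero.ne N
  rw [oneDimFT_eq_geom N c hcN j]
  set ω : ℂ := Complex.exp (-(2 * (Real.pi : ℂ) * Complex.I) * ((j.val : ℂ) / (N : ℂ))) with hω
  by_cases hj : j = 0
  · subst hj
    have hω1 : ω = 1 := by simp [hω, ZMod.val_zero]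
    rw [hω1]
    simp only [one_pow, Finset.sum_const, Finset.card_range, nsmul_eq_mul, mul_one]
    exact_mod_cast hc.ne'
  · have hω1 : ω ≠ 1 := by
      intro hω1
      have hd : N ∣ j.val := aux_exp_dvd N j.val hN hω1
      have := Nat.eq_zero_of_dvd_of_lt hd (ZMod.val_lt j)
      · exact hj ((ZMod.val_eq_zero j).mp this)
    rw [geom_sum_eq hω1]
    apply div_ne_zero _ (sub_ne_zero.mpr hω1)
    rw [sub_ne_zero]
    intro hωc
    apply hj
    apply h
    apply aux_exp_dvd N (j.val * c) hN
    rw [hω, ← Complex.exp_nat_mul] at hωc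
    rw [← hωc]
    congr 1
    push_cast
    ring

/-- number-theoretic step -/
lemma dvd_step (N c : ℕ) [NeZero N] (hc : 0 < c) (p q : ZMod N)
    (hp : p.val < N / Nat.gcd N c) (hq : q.val < N / Nat.gcd N c)
    (hdvd : N ∣ (p - q).val * c) : p - q = 0 := by
  have hN : 0 < N := Nat.pos_of_ne_zero (NeZero.ne N)
  set g := Nat.gcd N c with hg
  have hgpos : 0 < g := Nat.gcd_pos_of_pos_left c hN
  set m := N / g with hm
  have hmdvdN : m ∣ N := Nat.div_dvd_of_dvd (Nat.gcd_dvd_left N c)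
  have hmpos : 0 < m := Nat.div_pos (Nat.le_of_dvd hN (Nat.gcd_dvd_left N c)) hgpos
  haveI : NeZero m := ⟨hmpos.ne'⟩
  have hcop : Nat.Coprime m (c / g) := Nat.coprime_div_gcd_div_gcd hgpos
  have hNeq : N = m * g := (Nat.div_mul_cancel (Nat.gcd_dvd_left N c)).symm
  have hceq : c = (c / g) * g := (Nat.div_mul_cancel (Nat.gcd_dvd_right N c)).symm
  have hmd : m ∣ (p - q).val := by
    have h1 : m * g ∣ ((p - q).val * (c / g)) * g := by
      rw [show ((p - q).val * (c / g)) * g = (p - q).val * ((c / g) * g) by ring, ← hceq, ← hNeq]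
      exact hdvd
    have h2 : m ∣ (p - q).val * (c / g) := (Nat.mul_dvd_mul_iff_right hgpos).mp h1
    exact hcop.dvd_of_dvd_mul_right h2
  have hcast : ((p - q).val : ZMod m) = 0 := (ZMod.natCast_eq_zero_iff _ _).mpr hmd
  rw [ZMod.natCast_val] at hcast
  have hφ : (ZMod.castHom hmdvdN (ZMod m)) (p - q) = 0 := hcast
  rw [map_sub] at hφ
  have hpq : (ZMod.castHom hmdvdN (ZMod m)) p = (ZMod.castHom hmdvdN (ZMod m)) q := by
    linear_combination hφ
  have hvals : p.val = q.val := by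
    have h1 : (ZMod.castHom hmdvdN (ZMod m)) p = ((p.val : ZMod m)) := by
      simp [ZMod.castHom_apply, ZMod.natCast_val]
    have h2 : (ZMod.castHom hmdvdN (ZMod m)) q = ((q.val : ZMod m)) := by
      simp [ZMod.castHom_apply, ZMod.natCast_val]
    rw [h1, h2] at hpq
    have := congrArg ZMod.val hpq
    rwa [ZMod.val_cast_of_lt hp, ZMod.val_cast_of_lt hq] at this
  rw [ZMod.val_injective N hvals, sub_self]

/-- cubeFT factors -/
lemma cubeFT_eq (A B a b : ℕ) [NeZero A] [NeZero B] (j : ZMod A) (k : ZMod B) :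
    cubeFT A B a b j k = oneDimFT A a j * oneDimFT B b k := by
  unfold cubeFT oneDimFT
  rw [Finset.sum_mul_sum]
  refine Finset.sum_congr rfl fun x _ => Finset.sum_congr rfl fun y _ => ?_
  rw [mul_add, Complex.exp_add]
  by_cases hx : x.val < a <;> by_cases hy : y.val < b <;>
    simp [hx, hy] <;> ring

/-- The zero set of the Fourier transform of `𝟙_{[a]×[b]}` does not meet `Q' − Q'`. -/
theorem zero_set_disjoint_from_difference_set (A B a b : ℕ) [NeZero A] [NeZero B]
    (ha : 0 < a) (hb : 0 < b) (haA : a ≤ A) (hbB : b ≤ B) :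
    ∀ p ∈ Q' A B a b, ∀ q ∈ Q' A B a b,
      cubeFT A B a b (p - q).1 (p - q).2 ≠ 0 := by
  intro p hp q hq
  rw [Q', Finset.mem_filter] at hp hq
  rw [show (p - q).1 = p.1 - q.1 from rfl, show (p - q).2 = p.2 - q.2 from rfl, cubeFT_eq]
  have h1 := oneDimFT_ne_zero A a ha haA (p.1 - q.1)
    (fun hd => dvd_step A a ha p.1 q.1 hp.2.1 hq.2.1 hd)
  have h2 := oneDimFT_ne_zero B b hb hbB (p.2 - q.2)
    (fun hd => dvd_step B b hb p.2 q.2 hp.2.2 hq.2.2 hd)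
  exact mul_ne_zero h1 h2
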